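/- Solvability in the positive case: Let h : V → ℝ and c > 0. Then there exists a function u : V → ℝ satisfying −Δu(x) = h(x)e^{u(x)} − c for all x ∈ V if and only if max_{x∈V} h(x) > 0. -/

import Mathlib

open Finset Real

/-- The graph Laplacian: `Δu(x) = (1/μ x) * Σ_y ω x y * (u y - u x)`. -/
noncomputable def graphLap {V : Type*} [Fintype V] (ω : V → V → ℝ) (μ : V → ℝ)
    (u : V → ℝ) (x : V) : ℝ :=
  (1 / μ x) * ∑ y, ω x y * (u y - u x)

/-- The integral of `f` over `V` with respect to the vertex measure `μ`. -/
noncomputable def graphInt {V : Type*} [Fintype V] (μ : V → ℝ) (f : V → ℝ) : ℝ :=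
  ∑ x, f x * μ x

/-- Connectivity: any two distinct vertices are joined by a chain of positively
weighted edges. -/
def graphConn {V : Type*} (ω : V → V → ℝ) : Prop :=
  ∀ x y : V, x ≠ y → ∃ (m : ℕ) (p : ℕ → V), p 0 = x ∧ p m = y ∧
    ∀ i < m, 0 < ω (p i) (p (i + 1))

/-- The gradient form `Γ(u,v)(x)`. -/
noncomputable def graphGamma {V : Type*} [Fintype V] (ω : V → V → ℝ) (μ : V → ℝ)
    (u v : V → ℝ) (x : V) : ℝ :=
  (1 / (2 * μ x)) * ∑ y, ω x y * (u y - u x) * (v y - v x)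

/-- The length of the gradient: `|∇u|(x) = √(Γ(u,u)(x))`. -/
noncomputable def graphGradNorm {V : Type*} [Fintype V] (ω : V → V → ℝ) (μ : V → ℝ)
    (u : V → ℝ) (x : V) : ℝ :=
  Real.sqrt (graphGamma ω μ u u x)

/-- The functional `J_{h,f}(u) = ∫_V (½|∇u|² + f·u − h·e^u) dμ`. -/
noncomputable def Jfunc {V : Type*} [Fintype V] (ω : V → V → ℝ) (μ : V → ℝ)
    (h f : V → ℝ) (u : V → ℝ) : ℝ :=
  graphInt μ (fun x => (1 / 2) * (graphGradNorm ω μ u x) ^ 2 + f x * u x - h x * Real.exp (u x))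

namespace KWaux
variable {V : Type*} [Fintype V]

noncomputable def EB (ω : V → V → ℝ) (u v : V → ℝ) : ℝ :=
  (1/4) * ∑ x, ∑ y, ω x y * (u y - u x) * (v y - v x)

noncomputable def Sint (μ : V → ℝ) (u : V → ℝ) : ℝ := ∑ x, u x * μ x

noncomputable def gfun (μ h : V → ℝ) (u : V → ℝ) : ℝ := ∑ x, h x * Real.exp (u x) * μ x

noncomputable def Jf (ω : V → V → ℝ) (μ : V → ℝ) (c : ℝ) (u : V → ℝ) : ℝ :=
  EB ω u u + c * Sint μ u

noncomputable def δ [DecidableEq V] (z : V) : V → ℝ := fun y => if y = z then 1 else 0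

lemma EB_nonneg (ω : V → V → ℝ) (hnn : ∀ x y, 0 ≤ ω x y) (u : V → ℝ) :
    0 ≤ EB ω u u := by
  apply mul_nonneg (by norm_num)
  apply Finset.sum_nonneg; intro x _
  apply Finset.sum_nonneg; intro y _
  nlinarith [mul_nonneg (hnn x y) (mul_self_nonneg (u y - u x))]

lemma EB_term_le (ω : V → V → ℝ) (hnn : ∀ x y, 0 ≤ ω x y) (u : V → ℝ) (a b : V) :
    ω a b * (u b - u a) * (u b - u a) ≤ 4 * EB ω u u := by
  have h1 : ∀ x y : V, 0 ≤ ω x y * (u y - u x) * (u y - u x) := by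
    intro x y; nlinarith [mul_nonneg (hnn x y) (mul_self_nonneg (u y - u x))]
  have h2 : ω a b * (u b - u a) * (u b - u a) ≤ ∑ y, ω a y * (u y - u a) * (u y - u a) :=
    Finset.single_le_sum (fun y _ => h1 a y) (Finset.mem_univ b)
  have h3 : (∑ y, ω a y * (u y - u a) * (u y - u a)) ≤
      ∑ x, ∑ y, ω x y * (u y - u x) * (u y - u x) :=
    Finset.single_le_sum (fun x _ => Finset.sum_nonneg fun y _ => h1 x y) (Finset.mem_univ a)
  unfold EB; linarith

lemma edge_bound (ω : V → V → ℝ) (hnn : ∀ x y, 0 ≤ ω x y) (u : V → ℝ) (a b : V)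
    (hw : 0 < ω a b) :
    |u b - u a| ≤ 2 / Real.sqrt (ω a b) * Real.sqrt (EB ω u u) := by
  have hE : 0 ≤ EB ω u u := EB_nonneg ω hnn u
  have hle := EB_term_le ω hnn u a b
  set d := u b - u a
  set w := ω a b
  have hsw : 0 < Real.sqrt w := Real.sqrt_pos.2 hw
  have h1 : Real.sqrt w * Real.sqrt w = w := Real.mul_self_sqrt hw.le
  have h2 : Real.sqrt (EB ω u u) * Real.sqrt (EB ω u u) = EB ω u u := Real.mul_self_sqrt hE
  rw [div_mul_eq_mul_div, le_div_iff₀ hsw]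
  nlinarith [abs_nonneg d, sq_abs d, Real.sqrt_nonneg (EB ω u u),
    sq_nonneg (|d| * Real.sqrt w - 2 * Real.sqrt (EB ω u u))]

lemma EB_expand (ω : V → V → ℝ) (u φ : V → ℝ) (t s : ℝ) :
    EB ω (fun x => u x + t * φ x + s) (fun x => u x + t * φ x + s)
      = EB ω u u + t * (2 * EB ω u φ) + t^2 * EB ω φ φ := by
  unfold EB
  simp only []
  have key : ∀ x y : V, ω x y * ((u y + t * φ y + s) - (u x + t * φ x + s)) *
      ((u y + t * φ y + s) - (u x + t * φ x + s))
      = ω x y * (u y - u x) * (u y - u x) + t * (2 * (ω x y * (u y - u x) * (φ y - φ x)))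
        + t ^ 2 * (ω x y * (φ y - φ x) * (φ y - φ x)) := by intros; ring
  rw [Finset.sum_congr rfl fun x _ => Finset.sum_congr rfl fun y _ => key x y]
  simp only [Finset.sum_add_distrib, ← Finset.mul_sum]
  ring

lemma Sint_decomp (μ : V → ℝ) (u φ : V → ℝ) (t s : ℝ) :
    Sint μ (fun x => u x + t * φ x + s)
      = Sint μ u + t * Sint μ φ + s * ∑ x, μ x := by
  unfold Sint
  have key : ∀ x : V, (u x + t * φ x + s) * μ x
      = u x * μ x + t * (φ x * μ x) + s * μ x := by intros; ring
  rw [Finset.sum_congr rfl fun x _ => key x]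
  simp only [Finset.sum_add_distrib, ← Finset.mul_sum]

lemma Jf_expand (ω : V → V → ℝ) (μ : V → ℝ) (c : ℝ) (u φ : V → ℝ) (t s : ℝ) :
    Jf ω μ c (fun x => u x + t * φ x + s)
      = Jf ω μ c u + t * (2 * EB ω u φ) + t^2 * EB ω φ φ + t * (c * Sint μ φ)
        + c * s * ∑ x, μ x := by
  unfold Jf
  rw [EB_expand, Sint_decomp]; ring

lemma gfun_shift (μ h : V → ℝ) (u : V → ℝ) (a : ℝ) :
    gfun μ h (fun x => u x + a) = Real.exp a * gfun μ h u := by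
  unfold gfun
  rw [Finset.mul_sum]
  apply Finset.sum_congr rfl; intro x _
  rw [Real.exp_add]; ring

lemma gfun_cont (μ h : V → ℝ) : Continuous (gfun μ h) := by
  unfold gfun; fun_prop

lemma Jf_cont (ω : V → V → ℝ) (μ : V → ℝ) (c : ℝ) : Continuous (Jf ω μ c) := by
  unfold Jf EB Sint; fun_prop

lemma sbp [DecidableEq V] (ω : V → V → ℝ) (hsymm : ∀ x y, ω x y = ω y x) (u : V → ℝ) (z : V) :
    (∑ x, ∑ y, ω x y * (u y - u x) * (δ z y - δ z x))
      = -2 * ∑ y, ω z y * (u y - u z) := by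
  have e1 : ∀ x : V, ∑ y, ω x y * (u y - u x) * (δ z y - δ z x)
      = ω x z * (u z - u x) - (∑ y, ω x y * (u y - u x)) * δ z x := by
    intro x
    have : ∀ y : V, ω x y * (u y - u x) * (δ z y - δ z x)
        = (if y = z then ω x y * (u y - u x) else 0) - ω x y * (u y - u x) * δ z x := by
      intro y; unfold δ; by_cases hy : y = z
      · subst hy; rw [if_pos rfl, if_pos rfl]; ring
      · rw [if_neg hy, if_neg hy]; ring
    rw [Finset.sum_congr rfl fun y _ => this y, Finset.sum_sub_distrib,
      Finset.sum_ite_eq' Finset.univ z (fun y => ω x y * (u y - u x)), ← Finset.sum_mul]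
    simp
  rw [Finset.sum_congr rfl fun x _ => e1 x, Finset.sum_sub_distrib]
  have e2 : (∑ x, (∑ y, ω x y * (u y - u x)) * δ z x) = ∑ y, ω z y * (u y - u z) := by
    unfold δ
    rw [Finset.sum_congr rfl (fun x (_ : x ∈ Finset.univ) => by
      rw [mul_ite, mul_one, mul_zero] :
        ∀ x ∈ Finset.univ, (∑ y, ω x y * (u y - u x)) * (if x = z then (1:ℝ) else 0)
          = if x = z then (∑ y, ω x y * (u y - u x)) else 0),
      Finset.sum_ite_eq' Finset.univ z]
    simp
  have e3 : (∑ x, ω x z * (u z - u x)) = -∑ y, ω z y * (u y - u z) := by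
    rw [← Finset.sum_neg_distrib]
    apply Finset.sum_congr rfl; intro x _; rw [hsymm x z]; ring
  rw [e2, e3]; ring

lemma sum_mul_delta [DecidableEq V] (F : V → ℝ) (z : V) : (∑ x, F x * δ z x) = F z := by
  unfold δ
  rw [Finset.sum_congr rfl (fun x _ => by rw [mul_ite, mul_one, mul_zero]),
    Finset.sum_ite_eq' Finset.univ z]
  simp

lemma gfun_hasDeriv (μ h u φ : V → ℝ) :
    HasDerivAt (fun t : ℝ => gfun μ h (fun x => u x + t * φ x))
      (∑ x, h x * Real.exp (u x) * φ x * μ x) 0 := by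
  unfold gfun
  have key : ∀ x : V, HasDerivAt (fun t : ℝ => h x * Real.exp (u x + t * φ x) * μ x)
      (h x * Real.exp (u x) * φ x * μ x) 0 := by
    intro x
    have h1 : HasDerivAt (fun t : ℝ => u x + t * φ x) (φ x) 0 := by
      simpa using ((hasDerivAt_id (0:ℝ)).mul_const (φ x)).const_add (u x)
    have h2 := (h1.exp.const_mul (h x)).mul_const (μ x)
    simpa [mul_assoc, mul_comm, mul_left_comm] using h2
  simpa using HasDerivAt.fun_sum (fun x _ => key x)


variable [Nonempty V]

theorem exist (ω : V → V → ℝ) (μ : V → ℝ)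
    (hsymm : ∀ x y, ω x y = ω y x)
    (hnonneg : ∀ x y, 0 ≤ ω x y)
    (hconn : ∀ x y : V, x ≠ y → ∃ (m : ℕ) (p : ℕ → V), p 0 = x ∧ p m = y ∧
      ∀ i < m, 0 < ω (p i) (p (i + 1)))
    (hμ : ∀ x, 0 < μ x)
    (h : V → ℝ) (c : ℝ) (hc : 0 < c)
    (x₀ : V) (hx₀ : 0 < h x₀) :
    ∃ u : V → ℝ, ∀ z, -((1 / μ z) * ∑ y, ω z y * (u y - u z)) = h z * Real.exp (u z) - c := by
  classical
  obtain ⟨Vol, hVoldef⟩ : ∃ t : ℝ, t = ∑ x, μ x := ⟨_, rfl⟩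
  have hVol : 0 < Vol := hVoldef ▸ Finset.sum_pos (fun z _ => hμ z) Finset.univ_nonempty
  have hcV : 0 < c * Vol := mul_pos hc hVol
  -- Poincaré constant
  choose m p hp0 hpm hpw using hconn
  obtain ⟨Cp, hCpdef⟩ : ∃ F : V → V → ℝ, F = fun x y =>
      if hxy : x ≠ y then
        ∑ i ∈ Finset.range (m x y hxy), 2 / Real.sqrt (ω (p x y hxy i) (p x y hxy (i+1)))
      else 0 := ⟨_, rfl⟩
  have hCpnn : ∀ x y, 0 ≤ Cp x y := by
    intro x y; simp only [hCpdef]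
    by_cases hxy : x ≠ y
    · rw [dif_pos hxy]
      exact Finset.sum_nonneg fun i _ => by positivity
    · rw [dif_neg hxy]
  obtain ⟨C, hCdef⟩ : ∃ t : ℝ, t = ∑ x, ∑ y, Cp x y := ⟨_, rfl⟩
  have hCnn : 0 ≤ C := hCdef ▸
    Finset.sum_nonneg fun x _ => Finset.sum_nonneg fun y _ => hCpnn x y
  have hCple : ∀ x y, Cp x y ≤ C := by
    intro x y
    calc Cp x y ≤ ∑ b, Cp x b :=
          Finset.single_le_sum (fun b _ => hCpnn x b) (Finset.mem_univ y)
      _ ≤ C := hCdef ▸ Finset.single_le_sum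
          (fun a _ => Finset.sum_nonneg fun b _ => hCpnn a b) (Finset.mem_univ x)
  have poincare : ∀ (u : V → ℝ) (x y : V),
      u x - u y ≤ C * Real.sqrt (EB ω u u) := by
    intro u x y
    have hsn : 0 ≤ Real.sqrt (EB ω u u) := Real.sqrt_nonneg _
    rcases eq_or_ne y x with rfl | hyx
    · simpa using mul_nonneg hCnn hsn
    · have tel : u x - u y
          = ∑ i ∈ Finset.range (m y x hyx), (u (p y x hyx (i+1)) - u (p y x hyx i)) := by
        rw [Finset.sum_range_sub (fun i => u (p y x hyx i))]
        rw [hp0 y x hyx, hpm y x hyx]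
      calc u x - u y
          = ∑ i ∈ Finset.range (m y x hyx),
              (u (p y x hyx (i+1)) - u (p y x hyx i)) := tel
        _ ≤ ∑ i ∈ Finset.range (m y x hyx),
              |u (p y x hyx (i+1)) - u (p y x hyx i)| :=
            Finset.sum_le_sum fun i _ => le_abs_self _
        _ ≤ ∑ i ∈ Finset.range (m y x hyx),
              2 / Real.sqrt (ω (p y x hyx i) (p y x hyx (i+1))) * Real.sqrt (EB ω u u) :=
            Finset.sum_le_sum fun i hi =>
              edge_bound ω hnonneg u _ _ (hpw y x hyx i (Finset.mem_range.1 hi))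
        _ = Cp y x * Real.sqrt (EB ω u u) := by
            simp only [hCpdef]; rw [dif_pos hyx, Finset.sum_mul]
        _ ≤ C * Real.sqrt (EB ω u u) :=
            mul_le_mul_of_nonneg_right (hCple y x) hsn
  -- constants
  obtain ⟨A, hAdef⟩ : ∃ t : ℝ, t = ∑ x, |h x| * μ x := ⟨_, rfl⟩
  have hA : 0 < A := by
    have h1 : 0 < |h x₀| * μ x₀ := mul_pos (abs_pos.2 hx₀.ne') (hμ x₀)
    have h2 : |h x₀| * μ x₀ ≤ A := hAdef ▸
      Finset.single_le_sum (f := fun x => |h x| * μ x)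
        (fun x _ => mul_nonneg (abs_nonneg _) (hμ x).le) (Finset.mem_univ x₀)
    linarith
  obtain ⟨K, hKdef⟩ : ∃ t : ℝ, t = Real.log (c * Vol) - Real.log A := ⟨_, rfl⟩
  -- coercivity
  obtain ⟨RR, hRRdef⟩ : ∃ F : ℝ → ℝ, F = fun L =>
      C * (c*Vol*C + |L - c*Vol*K| + 1)
        + (|L|/(c*Vol) + |K| + C * (c*Vol*C + |L - c*Vol*K| + 1)) := ⟨_, rfl⟩
  have coerc : ∀ (L : ℝ) (u : V → ℝ), gfun μ h u = c * Vol → Jf ω μ c u ≤ L →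
      ∀ x, |u x| ≤ RR L := by
    intro L u hgu hJu x
    have hEnn : 0 ≤ EB ω u u := EB_nonneg ω hnonneg u
    obtain ⟨ee, heedef⟩ : ∃ t : ℝ, t = Real.sqrt (EB ω u u) := ⟨_, rfl⟩
    have hee : 0 ≤ ee := heedef ▸ Real.sqrt_nonneg _
    have hee2 : ee * ee = EB ω u u := by rw [heedef]; exact Real.mul_self_sqrt hEnn
    obtain ⟨ub, hubdef⟩ : ∃ t : ℝ, t = Sint μ u / Vol := ⟨_, rfl⟩
    have hSu : Sint μ u = ub * Vol := by
      rw [hubdef]; field_simp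
    obtain ⟨v, hvdef⟩ : ∃ F : V → ℝ, F = fun y => u y - ub := ⟨_, rfl⟩
    have hvS : Sint μ v = 0 := by
      have : Sint μ v = Sint μ u - ub * Vol := by
        simp only [Sint, hvdef, hVoldef]
        rw [Finset.mul_sum, ← Finset.sum_sub_distrib]
        apply Finset.sum_congr rfl; intros; ring
      rw [this, hSu]; ring
    have hplus : ∃ a, 0 ≤ v a := by
      by_contra hcon
      push_neg at hcon
      have : Sint μ v < 0 := by
        have := Finset.sum_lt_sum_of_nonempty (Finset.univ_nonempty (α := V))
          (f := fun y => v y * μ y) (g := fun _ => (0:ℝ))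
          (fun i _ => mul_neg_of_neg_of_pos (hcon i) (hμ i))
        simpa [Sint] using this
      linarith [hvS]
    have hminus : ∃ b, v b ≤ 0 := by
      by_contra hcon
      push_neg at hcon
      have : 0 < Sint μ v := by
        have := Finset.sum_lt_sum_of_nonempty (Finset.univ_nonempty (α := V))
          (f := fun _ => (0:ℝ)) (g := fun y => v y * μ y)
          (fun i _ => mul_pos (hcon i) (hμ i))
        simpa [Sint] using this
      linarith [hvS]
    obtain ⟨a, ha⟩ := hplus
    obtain ⟨b, hb⟩ := hminus
    simp only [hvdef] at ha hb
    have hvb : ∀ y, |v y| ≤ C * ee := by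
      intro y
      rw [abs_le]
      constructor
      · have h1 := poincare u a y
        simp only [hvdef]
        rw [heedef]
        linarith
      · have h1 := poincare u y b
        simp only [hvdef]
        rw [heedef]
        linarith
    have hufact : u = fun y => v y + ub := by
      funext y; simp [hvdef]
    have hgdecomp : c * Vol = Real.exp ub * gfun μ h v := by
      rw [← hgu]
      conv_lhs => rw [hufact]
      exact gfun_shift μ h v ub
    have hgvpos : 0 < gfun μ h v := by
      nlinarith [Real.exp_pos ub, hcV, hgdecomp]
    have hgvle : gfun μ h v ≤ A * Real.exp (C * ee) := by
      have h1 : gfun μ h v ≤ ∑ y, |h y| * Real.exp (C * ee) * μ y := by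
        unfold gfun
        apply Finset.sum_le_sum
        intro y _
        have h2 : Real.exp (v y) ≤ Real.exp (C * ee) :=
          Real.exp_le_exp.2 (le_trans (le_abs_self _) (hvb y))
        have h3 : h y ≤ |h y| := le_abs_self _
        calc h y * Real.exp (v y) * μ y
            ≤ |h y| * Real.exp (v y) * μ y :=
              mul_le_mul_of_nonneg_right
                (mul_le_mul_of_nonneg_right h3 (Real.exp_pos _).le) (hμ y).le
          _ ≤ |h y| * Real.exp (C * ee) * μ y :=
              mul_le_mul_of_nonneg_right
                (mul_le_mul_of_nonneg_left h2 (abs_nonneg _)) (hμ y).le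
      have hgen : ∀ E0 : ℝ, (∑ y, |h y| * E0 * μ y) = A * E0 := by
        intro E0
        rw [hAdef, Finset.sum_mul]
        apply Finset.sum_congr rfl; intros; ring
      calc gfun μ h v ≤ ∑ y, |h y| * Real.exp (C * ee) * μ y := h1
        _ = A * Real.exp (C * ee) := hgen _
    have hub_eq : ub = Real.log (c * Vol) - Real.log (gfun μ h v) := by
      have h1 : Real.exp ub = (c * Vol) / gfun μ h v := by
        field_simp [hgdecomp]
        exact hgdecomp.symm
      have h2 := congrArg Real.log h1
      rw [Real.log_exp, Real.log_div hcV.ne' hgvpos.ne'] at h2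
      exact h2
    have hub_lb : K - C * ee ≤ ub := by
      have h1 : Real.log (gfun μ h v) ≤ Real.log (A * Real.exp (C * ee)) :=
        Real.log_le_log hgvpos hgvle
      rw [Real.log_mul hA.ne' (Real.exp_ne_zero _), Real.log_exp] at h1
      rw [hub_eq, hKdef]
      linarith
    have hJeq : Jf ω μ c u = EB ω u u + c * Vol * ub := by
      rw [Jf, hSu]; ring
    have hkey : EB ω u u ≤ L - c * Vol * K + c * Vol * (C * ee) := by
      have h1 : c * Vol * (K - C * ee) ≤ c * Vol * ub :=
        mul_le_mul_of_nonneg_left hub_lb hcV.le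
      linarith only [h1, hJu, hJeq]
    obtain ⟨R₀, hR₀def⟩ : ∃ t : ℝ, t = c*Vol*C + |L - c*Vol*K| + 1 := ⟨_, rfl⟩
    have hR₀nn : 0 ≤ R₀ := by
      rw [hR₀def]
      linarith only [abs_nonneg (L - c*Vol*K), mul_nonneg hcV.le hCnn]
    have heR : ee ≤ R₀ := by
      by_contra hgt
      push_neg at hgt
      have h1 : ee * ee ≤ L - c*Vol*K + c*Vol*C*ee := by
        linarith only [hkey, hee2]
      have h2 : L - c*Vol*K ≤ |L - c*Vol*K| := le_abs_self _
      have h3 : 0 ≤ c*Vol*C := mul_nonneg hcV.le hCnn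
      rw [hR₀def] at hgt
      have h4 : 1 ≤ ee := by
        linarith only [hgt, h3, abs_nonneg (L - c*Vol*K)]
      have h5 : (c*Vol*C + |L - c*Vol*K| + 1) * ee < ee * ee :=
        mul_lt_mul_of_pos_right hgt (by linarith only [h4])
      have h6 : 0 ≤ |L - c*Vol*K| * (ee - 1) :=
        mul_nonneg (abs_nonneg _) (by linarith only [h4])
      linarith only [h1, h2, h4, h5, h6]
    have hub_ub : ub ≤ L / (c * Vol) := by
      rw [le_div_iff₀ hcV]
      linarith only [hJu, hJeq, hEnn]
    have hub_lb2 : K - C * R₀ ≤ ub := by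
      have h1 : C * ee ≤ C * R₀ := mul_le_mul_of_nonneg_left heR hCnn
      linarith [hub_lb]
    have habs_ub : |ub| ≤ |L|/(c*Vol) + |K| + C * R₀ := by
      have hCR : 0 ≤ C * R₀ := mul_nonneg hCnn hR₀nn
      have hLd : L / (c*Vol) ≤ |L|/(c*Vol) :=
        (div_le_div_iff_of_pos_right hcV).2 (le_abs_self L)
      have hLd0 : 0 ≤ |L|/(c*Vol) := div_nonneg (abs_nonneg L) hcV.le
      rw [abs_le]
      constructor
      · linarith only [hub_lb2, neg_abs_le K, hLd0, hCR]
      · linarith only [hub_ub, hLd, abs_nonneg K, hCR]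
    have hvx := hvb x
    have hux : u x = v x + ub := by rw [hufact]
    have hCee : C * ee ≤ C * R₀ := mul_le_mul_of_nonneg_left heR hCnn
    calc |u x| = |v x + ub| := by rw [hux]
      _ ≤ |v x| + |ub| := abs_add_le _ _
      _ ≤ C * R₀ + (|L|/(c*Vol) + |K| + C * R₀) := by
            linarith only [hvx, habs_ub, hCee, hub_lb]
      _ = RR L := by rw [hRRdef, hR₀def]
  -- a point on the constraint set
  have hu₁ex : ∃ u : V → ℝ, gfun μ h u = c * Vol := by
    have hshift : ∀ u : V → ℝ, 0 < gfun μ h u →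
        gfun μ h (fun x => u x + Real.log (c * Vol / gfun μ h u)) = c * Vol := by
      intro u hgu
      rw [gfun_shift, Real.exp_log (by positivity)]
      field_simp
    obtain ⟨B, hBdef⟩ : ∃ t : ℝ, t = ∑ x ∈ Finset.univ.erase x₀, h x * μ x := ⟨_, rfl⟩
    obtain ⟨T, hTdef⟩ : ∃ t : ℝ, t = Real.log ((|B| + 1) / (h x₀ * μ x₀)) := ⟨_, rfl⟩
    obtain ⟨w, hwdef⟩ : ∃ F : V → ℝ, F = fun x => if x = x₀ then T else 0 := ⟨_, rfl⟩
    have hwx₀ : w x₀ = T := by rw [hwdef]; simp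
    have hwne : ∀ x, x ≠ x₀ → w x = 0 := by
      intro x hx; rw [hwdef]; simp [hx]
    have hexpT : Real.exp T = (|B| + 1) / (h x₀ * μ x₀) := by
      rw [hTdef]
      exact Real.exp_log (div_pos (by positivity) (mul_pos hx₀ (hμ x₀)))
    have hgw : gfun μ h w = B + |B| + 1 := by
      unfold gfun
      rw [← Finset.sum_erase_add Finset.univ _ (Finset.mem_univ x₀)]
      have h1 : (∑ x ∈ Finset.univ.erase x₀, h x * Real.exp (w x) * μ x) = B := by
        rw [hBdef]
        apply Finset.sum_congr rfl
        intro x hx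
        rw [hwne x (Finset.ne_of_mem_erase hx), Real.exp_zero, mul_one]
      rw [h1, hwx₀, hexpT]
      have hpos : h x₀ * μ x₀ ≠ 0 := (mul_pos hx₀ (hμ x₀)).ne'
      field_simp
      linear_combination (|B| + 1) * mul_inv_cancel₀ (hμ x₀).ne'
    have hgwpos : 0 < gfun μ h w := by
      rw [hgw]
      linarith [neg_abs_le B]
    exact ⟨_, hshift w hgwpos⟩
  obtain ⟨u₁, hu₁⟩ := hu₁ex
  obtain ⟨L, hLdef⟩ : ∃ t : ℝ, t = Jf ω μ c u₁ := ⟨_, rfl⟩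
  obtain ⟨R, hRdef⟩ : ∃ t : ℝ, t = RR L := ⟨_, rfl⟩
  set Bs : Set (V → ℝ) :=
    {u | gfun μ h u = c * Vol} ∩ Set.univ.pi (fun _ => Set.Icc (-R) R) with hBsdef
  have hcomp : IsCompact Bs := by
    have h1 : IsCompact (Set.univ.pi fun _ : V => Set.Icc (-R) R) :=
      isCompact_univ_pi fun _ => isCompact_Icc
    have h2 : IsClosed {u : V → ℝ | gfun μ h u = c * Vol} :=
      isClosed_eq (gfun_cont μ h) continuous_const
    exact h1.inter_left h2
  have hmemIcc : ∀ u : V → ℝ, (∀ x, |u x| ≤ R) →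
      u ∈ Set.univ.pi (fun _ : V => Set.Icc (-R) R) := by
    intro u hu
    intro x _
    exact abs_le.1 (hu x)
  have hu₁mem : u₁ ∈ Bs := ⟨hu₁, hmemIcc u₁ (fun x => hRdef ▸ coerc L u₁ hu₁ hLdef.ge x)⟩
  obtain ⟨u₀, hu₀B, hu₀min⟩ :=
    hcomp.exists_isMinOn ⟨u₁, hu₁mem⟩ (Jf_cont ω μ c).continuousOn
  have hg₀ : gfun μ h u₀ = c * Vol := hu₀B.1
  have hglobal : ∀ u : V → ℝ, gfun μ h u = c * Vol → Jf ω μ c u₀ ≤ Jf ω μ c u := by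
    intro u hg
    by_contra hlt
    push_neg at hlt
    have h1 : Jf ω μ c u₀ ≤ Jf ω μ c u₁ := hu₀min hu₁mem
    have h2 : u ∈ Bs := ⟨hg, hmemIcc u (fun x => hRdef ▸ coerc L u hg (by rw [hLdef]; linarith) x)⟩
    exact absurd (hu₀min h2) (not_le.2 hlt)
  -- Euler–Lagrange
  refine ⟨u₀, fun z => ?_⟩
  obtain ⟨φ, hφdef⟩ : ∃ F : V → ℝ, F = δ z := ⟨_, rfl⟩
  obtain ⟨gφ, hgφdef⟩ : ∃ F : ℝ → ℝ,
      F = fun t => gfun μ h (fun x => u₀ x + t * φ x) := ⟨_, rfl⟩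
  have hgφ0 : gφ 0 = c * Vol := by
    rw [hgφdef]
    simp only []
    have : (fun x => u₀ x + 0 * φ x) = u₀ := by funext x; ring
    rw [this, hg₀]
  have hgφcont : Continuous gφ := by
    rw [hgφdef]; unfold gfun; fun_prop
  obtain ⟨G', hG'def⟩ : ∃ t : ℝ, t = ∑ x, h x * Real.exp (u₀ x) * φ x * μ x := ⟨_, rfl⟩
  have hgφderiv : HasDerivAt gφ G' 0 := by
    rw [hgφdef, hG'def]; exact gfun_hasDeriv μ h u₀ φ
  obtain ⟨f, hfdef⟩ : ∃ F : ℝ → ℝ, F = fun t =>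
      Jf ω μ c u₀ + t * (2 * EB ω u₀ φ) + t^2 * EB ω φ φ + t * (c * Sint μ φ)
        + c * (Real.log (c * Vol) - Real.log (gφ t)) * Vol := ⟨_, rfl⟩
  -- f is locally J along the constrained path, hence has a local min at 0
  have hlocmin : IsLocalMin f 0 := by
    have hev : ∀ᶠ t in nhds (0:ℝ), 0 < gφ t := by
      have : ContinuousAt gφ 0 := hgφcont.continuousAt
      have hmem : Set.Ioi (0:ℝ) ∈ nhds (gφ 0) := Ioi_mem_nhds (by rw [hgφ0]; exact hcV)
      exact this.eventually_mem hmem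
    refine hev.mono fun t hgt => ?_
    obtain ⟨st, hstdef⟩ : ∃ s : ℝ, s = Real.log (c * Vol) - Real.log (gφ t) := ⟨_, rfl⟩
    have hf0 : f 0 = Jf ω μ c u₀ := by
      rw [hfdef]; simp [hgφ0]
    have hgut : gfun μ h (fun x => u₀ x + t * φ x + st) = c * Vol := by
      have h1 : gfun μ h (fun x => (fun y => u₀ y + t * φ y) x + st)
          = Real.exp st * gfun μ h (fun y => u₀ y + t * φ y) := gfun_shift μ h _ st
      have h2 : gfun μ h (fun y => u₀ y + t * φ y) = gφ t := by rw [hgφdef]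
      rw [h2] at h1
      have h3 : Real.exp st = (c * Vol) / gφ t := by
        rw [hstdef, Real.exp_sub, Real.exp_log hcV, Real.exp_log hgt]
      calc gfun μ h (fun x => u₀ x + t * φ x + st)
          = Real.exp st * gφ t := h1
        _ = c * Vol := by rw [h3]; field_simp
    have hft : f t = Jf ω μ c (fun x => u₀ x + t * φ x + st) := by
      rw [hfdef]
      simp only []
      rw [Jf_expand ω μ c u₀ φ t st, ← hVoldef, ← hstdef]
    have hmin := hglobal _ hgut
    rw [hf0, hft]
    exact hmin
  -- compute the derivative of f at 0
  have hfderiv : HasDerivAt f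
      ((0 + 1 * (2 * EB ω u₀ φ) + (2 * 0^1) * EB ω φ φ + 1 * (c * Sint μ φ))
        + c * (0 - G' / gφ 0) * Vol) 0 := by
    rw [hfdef]
    have h1 : HasDerivAt (fun t : ℝ => Jf ω μ c u₀ + t * (2 * EB ω u₀ φ)
        + t^2 * EB ω φ φ + t * (c * Sint μ φ))
        (0 + 1 * (2 * EB ω u₀ φ) + (2 * 0^1) * EB ω φ φ + 1 * (c * Sint μ φ)) 0 := by
      have ha := (hasDerivAt_const (0:ℝ) (Jf ω μ c u₀))
      have hb := (hasDerivAt_id (0:ℝ)).mul_const (2 * EB ω u₀ φ)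
      have hcc := (hasDerivAt_pow 2 (0:ℝ)).mul_const (EB ω φ φ)
      have hd := (hasDerivAt_id (0:ℝ)).mul_const (c * Sint μ φ)
      have := ((ha.add hb).add hcc).add hd
      simp only [Pi.add_def] at this
      simpa using this
    have h2 : HasDerivAt (fun t : ℝ => c * (Real.log (c * Vol) - Real.log (gφ t)) * Vol)
        (c * (0 - G' / gφ 0) * Vol) 0 := by
      have hlog : HasDerivAt (fun t => Real.log (gφ t)) (G' / gφ 0) 0 :=
        hgφderiv.log (by rw [hgφ0]; exact hcV.ne')
      have := ((hlog.const_sub (Real.log (c * Vol))).const_mul c).mul_const Vol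
      simpa using this
    exact h1.add h2
  have hD0 := hlocmin.hasDerivAt_eq_zero hfderiv
  rw [hgφ0] at hD0
  -- evaluate the pieces
  have hSφ : Sint μ φ = μ z := by
    rw [hφdef]
    unfold Sint
    rw [Finset.sum_congr rfl fun x _ => mul_comm (δ z x) (μ x), sum_mul_delta]
  have hG' : G' = h z * Real.exp (u₀ z) * μ z := by
    rw [hG'def, hφdef]
    have : ∀ x : V, h x * Real.exp (u₀ x) * δ z x * μ x
        = (fun y => h y * Real.exp (u₀ y) * μ y) x * δ z x := by intro x; ring
    rw [Finset.sum_congr rfl fun x _ => this x, sum_mul_delta]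
  have hEBφ : EB ω u₀ φ = (1/4) * (-2 * ∑ y, ω z y * (u₀ y - u₀ z)) := by
    rw [hφdef]
    unfold EB
    rw [sbp ω hsymm u₀ z]
  rw [hSφ, hG', hEBφ] at hD0
  have hμz := (hμ z).ne'
  have hcVne := hcV.ne'
  field_simp at hD0
  have hne4 : (4 * (c * Vol)) ≠ 0 := by positivity
  have key : (∑ y, ω z y * (u₀ y - u₀ z)) = (c - h z * Real.exp (u₀ z)) * μ z := by
    have h5 : ((∑ y, ω z y * (u₀ y - u₀ z)) - (c - h z * Real.exp (u₀ z)) * μ z)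
        * (4 * (c * Vol)) = 0 := by linear_combination (-(c * Vol)) * hD0
    rcases mul_eq_zero.1 h5 with h6 | h6
    · linarith
    · exact absurd h6 hne4
  rw [key]
  field_simp
  ring

end KWaux


private theorem kw_fwd {V : Type*} [Fintype V] [Nonempty V]
    (ω : V → V → ℝ) (μ : V → ℝ)
    (hsymm : ∀ x y, ω x y = ω y x)
    (hμ : ∀ x, 0 < μ x)
    (h : V → ℝ) (c : ℝ) (hc : 0 < c)
    (u : V → ℝ) (hu : ∀ x, -graphLap ω μ u x = h x * Real.exp (u x) - c) :
    0 < ⨆ x, h x := by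
  have hS : (∑ z, ∑ y, ω z y * (u y - u z)) = 0 := by
    have h2 : (∑ z, ∑ y, ω z y * (u y - u z))
        = -∑ z, ∑ y, ω z y * (u y - u z) := by
      calc (∑ z, ∑ y, ω z y * (u y - u z))
          = ∑ y, ∑ z, ω z y * (u y - u z) := Finset.sum_comm
        _ = ∑ a, ∑ b, -(ω a b * (u b - u a)) := by
            apply Finset.sum_congr rfl; intro a _
            apply Finset.sum_congr rfl; intro b _
            rw [hsymm b a]; ring
        _ = -∑ z, ∑ y, ω z y * (u y - u z) := by
            simp [Finset.sum_neg_distrib]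
    linarith
  have key : (∑ z, (h z * Real.exp (u z) - c) * μ z) = 0 := by
    have : ∀ z : V, (h z * Real.exp (u z) - c) * μ z
        = -(∑ y, ω z y * (u y - u z)) := by
      intro z
      have hz := hu z
      unfold graphLap at hz
      have hμz := (hμ z).ne'
      field_simp at hz
      nlinarith [hz]
    rw [Finset.sum_congr rfl fun z _ => this z]
    simp only [Finset.sum_neg_distrib, hS, neg_zero]
  have hsum : (∑ z, h z * Real.exp (u z) * μ z) = c * ∑ z, μ z := by
    have : (∑ z, (h z * Real.exp (u z) - c) * μ z)
        = (∑ z, h z * Real.exp (u z) * μ z) - c * ∑ z, μ z := by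
      rw [Finset.mul_sum, ← Finset.sum_sub_distrib]
      apply Finset.sum_congr rfl; intros; ring
    rw [this] at key; linarith
  have hVol : 0 < ∑ z, μ z :=
    Finset.sum_pos (fun z _ => hμ z) Finset.univ_nonempty
  have hex : ∃ z, 0 < h z := by
    by_contra hcon
    push_neg at hcon
    have : (∑ z, h z * Real.exp (u z) * μ z) ≤ 0 := by
      apply Finset.sum_nonpos; intro z _
      have h1 : h z * Real.exp (u z) ≤ 0 :=
        mul_nonpos_of_nonpos_of_nonneg (hcon z) (Real.exp_pos _).le
      exact mul_nonpos_of_nonpos_of_nonneg h1 (hμ z).le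
    nlinarith
  obtain ⟨z, hz⟩ := hex
  calc (0:ℝ) < h z := hz
    _ ≤ ⨆ x, h x := le_ciSup (Set.Finite.bddAbove (Set.finite_range h)) z


/-- Solvability in the positive case: for `c > 0`, the Kazdan–Warner equation
`−Δu = h e^u − c` is solvable if and only if `max h > 0`. -/
theorem kazdan_warner_positive_case {V : Type*} [Fintype V] [Nonempty V]
    (ω : V → V → ℝ) (μ : V → ℝ)
    (hsymm : ∀ x y, ω x y = ω y x)
    (hnonneg : ∀ x y, 0 ≤ ω x y)
    (hconn : graphConn ω)
    (hμ : ∀ x, 0 < μ x)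
    (h : V → ℝ) (c : ℝ) (hc : 0 < c) :
    (∃ u : V → ℝ, ∀ x, -graphLap ω μ u x = h x * Real.exp (u x) - c) ↔
      0 < ⨆ x, h x := by
  constructor
  · rintro ⟨u, hu⟩
    exact kw_fwd ω μ hsymm hμ h c hc u hu
  · intro hsup
    obtain ⟨x₀, hx₀⟩ : ∃ x, 0 < h x := by
      by_contra hcon
      push_neg at hcon
      have : (⨆ x, h x) ≤ 0 := ciSup_le hcon
      linarith
    obtain ⟨u, hu⟩ := KWaux.exist ω μ hsymm hnonneg (fun x y hxy => hconn x y hxy) hμ h c hc x₀ hx₀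
    refine ⟨u, fun x => ?_⟩
    rw [graphLap]
    exact hu x
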